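/- Let f = Σₙ aₙ eₙ* ∈ ℓ¹ = c₀* with |a₁| = supₙ |aₙ| > 0 and let X = ker f. Then for every y = (y₁, y₂, ...) ∈ X, the series Σ_{n≥1} y_{n+1} (e_{n+1} - (a_{n+1}/a₁) e₁) converges in c₀ to y. In particular the vectors xₙ = e_{n+1} - (a_{n+1}/a₁) e₁ have closed linear span equal to X. -/

import Mathlib

open ZeroAtInftyContinuousMap Filter
open scoped ZeroAtInfty

/-- The `k`-th standard unit vector `e_k` in `c₀` (indices starting at `0`). -/
noncomputable def e (k : ℕ) : C₀(ℕ, ℝ) where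
  toFun := Pi.single k 1
  zero_at_infty' := by
    refine Filter.Tendsto.congr' ?_ tendsto_const_nhds
    have h : {k}ᶜ ∈ Filter.cocompact ℕ := by
      rw [Filter.cocompact_eq_cofinite]
      simp [Filter.mem_cofinite]
    filter_upwards [h] with n hn
    simp only [Set.mem_compl_iff, Set.mem_singleton_iff] at hn
    simp [Pi.single_apply, hn]

/-- The `k`-th coordinate functional `e_k^*` on `c₀`. -/
noncomputable def coord (k : ℕ) : C₀(ℕ, ℝ) →L[ℝ] ℝ :=
  LinearMap.mkContinuous
    { toFun := fun y => y k
      map_add' := by intros; rfl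
      map_smul' := by intros; rfl }
    1
    (fun y => by simpa using y.toBCF.norm_coe_le_norm k)

/-- The functional `f = ∑ₙ aₙ eₙ^* ∈ ℓ¹ = c₀^*` determined by a (summable) coefficient
sequence `a`. -/
noncomputable def funcOf (a : ℕ → ℝ) : C₀(ℕ, ℝ) →L[ℝ] ℝ := ∑' n : ℕ, a n • coord n

/-- The vectors `xₙ = e_{n+1} - (a_{n+1}/a₀) • e₀` (here `a₀` plays the role of the
coefficient of maximal absolute value, i.e. the paper's `a₁`). -/
noncomputable def xvec (a : ℕ → ℝ) (n : ℕ) : C₀(ℕ, ℝ) :=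
  e (n + 1) - (a (n + 1) / a 0) • e 0

lemma coord_apply (k : ℕ) (y : C₀(ℕ, ℝ)) : coord k y = y k := rfl

lemma e_apply (k n : ℕ) : e k n = if n = k then 1 else 0 := by
  rw [show ⇑(e k) = Pi.single k (1 : ℝ) from rfl]
  simp [Pi.single_apply]

lemma norm_coord_le (k : ℕ) : ‖coord k‖ ≤ 1 :=
  LinearMap.mkContinuous_norm_le _ zero_le_one _

lemma norm_apply_le (y : C₀(ℕ, ℝ)) (k : ℕ) : |y k| ≤ ‖y‖ := by
  simpa using y.toBCF.norm_coe_le_norm k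

lemma summable_term (a : ℕ → ℝ) (ha : Summable a) :
    Summable (fun n => a n • coord n) := by
  refine Summable.of_norm_bounded (E := C₀(ℕ, ℝ) →L[ℝ] ℝ) (g := fun n => |a n|) ha.abs (fun n => ?_)
  refine ContinuousLinearMap.opNorm_le_bound _ (abs_nonneg _) (fun y => ?_)
  rw [ContinuousLinearMap.smul_apply]
  show ‖a n • y n‖ ≤ _
  rw [smul_eq_mul, Real.norm_eq_abs, abs_mul]
  exact mul_le_mul_of_nonneg_left (norm_apply_le y n) (abs_nonneg _)

lemma summable_mul (a : ℕ → ℝ) (ha : Summable a) (y : C₀(ℕ, ℝ)) :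
    Summable (fun n => a n * y n) := by
  refine Summable.of_norm_bounded (ha.abs.mul_right ‖y‖) (fun n => ?_)
  rw [Real.norm_eq_abs, abs_mul]
  exact mul_le_mul_of_nonneg_left (norm_apply_le y n) (abs_nonneg _)

lemma funcOf_apply (a : ℕ → ℝ) (ha : Summable a) (y : C₀(ℕ, ℝ)) :
    funcOf a y = ∑' n, a n * y n := by
  have h := (ContinuousLinearMap.apply ℝ ℝ y).map_tsum (summable_term a ha)
  simpa [funcOf, coord_apply] using h

lemma funcOf_e (a : ℕ → ℝ) (ha : Summable a) (k : ℕ) : funcOf a (e k) = a k := by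
  rw [funcOf_apply a ha]
  rw [show (fun n => a n * e k n) = fun n => if n = k then a k else 0 by
    funext n
    rcases eq_or_ne n k with rfl | hn
    · simp [e_apply]
    · simp [e_apply, hn]]
  exact tsum_ite_eq k (fun _ => a k)

lemma norm_le_forall (y : C₀(ℕ, ℝ)) {C : ℝ} (hC : 0 ≤ C) (h : ∀ k, |y k| ≤ C) :
    ‖y‖ ≤ C := by
  rw [← norm_toBCF_eq_norm]
  exact (BoundedContinuousFunction.norm_le hC).mpr (fun k => by
    simpa [Real.norm_eq_abs] using h k)

lemma sum_apply_eq (c : ℕ → ℝ) (M k : ℕ) :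
    (∑ n ∈ Finset.range M, c n • e n) k = if k ∈ Finset.range M then c k else 0 := by
  have h := map_sum (coord k) (fun n => c n • e n) (Finset.range M)
  rw [coord_apply] at h
  rw [h]
  have h2 : ∀ n ∈ Finset.range M, coord k (c n • e n) = if k = n then c n else 0 := by
    intro n _
    rcases eq_or_ne k n with rfl | hk
    · simp [coord_apply, e_apply]
    · simp [coord_apply, e_apply, hk]
  rw [Finset.sum_congr rfl h2, Finset.sum_ite_eq]

/-- Truncation convergence in `c₀`. -/
lemma trunc (y : C₀(ℕ, ℝ)) :
    Filter.Tendsto (fun N => ∑ n ∈ Finset.range N, y n • e n) Filter.atTop (nhds y) := by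
  rw [Metric.tendsto_atTop]
  intro ε hε
  have hy : Tendsto (fun k => y k) atTop (nhds 0) := by
    have h := zero_at_infty y
    rwa [cocompact_eq_cofinite, Nat.cofinite_eq_atTop] at h
  obtain ⟨K, hK⟩ := (Metric.tendsto_atTop.mp hy) (ε / 2) (half_pos hε)
  refine ⟨K, fun M hM => ?_⟩
  rw [dist_eq_norm]
  have hb : ‖(∑ n ∈ Finset.range M, y n • e n) - y‖ ≤ ε / 2 := by
    refine norm_le_forall ((∑ n ∈ Finset.range M, y n • e n) - y) (le_of_lt (half_pos hε)) (fun k => ?_)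
    rw [ZeroAtInftyContinuousMap.coe_sub]
    simp only [Pi.sub_apply]
    rw [sum_apply_eq]
    by_cases hk : k ∈ Finset.range M
    · simp [hk, le_of_lt (half_pos hε)]
    · simp only [hk, if_false, zero_sub, abs_neg]
      have hkK : K ≤ k := le_trans hM (not_lt.mp (fun h => hk (Finset.mem_range.mpr h)))
      have := hK k hkK
      rw [Real.dist_eq, sub_zero] at this
      exact le_of_lt this
  linarith

/-- With `f`, `X = ker f` and `xₙ` as above: for every `y ∈ X` the series
`∑ₙ y_{n+1} xₙ` converges in `c₀` to `y`; in particular the closed linear span of the `xₙ`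
is exactly `X = ker f`. -/
theorem stmt2 (a : ℕ → ℝ) (ha : Summable a) (ha0 : 0 < |a 0|)
    (hmax : ∀ n, |a n| ≤ |a 0|) :
    (∀ y : C₀(ℕ, ℝ), funcOf a y = 0 →
      Filter.Tendsto (fun N => ∑ n ∈ Finset.range N, y (n + 1) • xvec a n)
        Filter.atTop (nhds y)) ∧
    (Submodule.span ℝ (Set.range (xvec a))).topologicalClosure
      = LinearMap.ker (funcOf a : C₀(ℕ, ℝ) →ₗ[ℝ] ℝ) := by
  have ha0' : a 0 ≠ 0 := fun h => by simp [h] at ha0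
  have key : ∀ y : C₀(ℕ, ℝ), funcOf a y = 0 →
      Tendsto (fun N => ∑ n ∈ Finset.range N, y (n + 1) • xvec a n) atTop (nhds y) := by
    intro y hf
    have hsum : ∑' n, a n * y n = 0 := by rw [← funcOf_apply a ha y, hf]
    have hg : Summable (fun n => a n * y n) := summable_mul a ha y
    have hps : Tendsto (fun N => ∑ n ∈ Finset.range N, a n * y n) atTop (nhds 0) := by
      have h := hg.hasSum.tendsto_sum_nat
      rwa [hsum] at h
    have hshift : Tendsto (fun N => ∑ n ∈ Finset.range N, a (n + 1) * y (n + 1)) atTop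
        (nhds (0 - a 0 * y 0)) := by
      have h1 : Tendsto (fun N => (∑ n ∈ Finset.range (N + 1), a n * y n) - a 0 * y 0) atTop
          (nhds (0 - a 0 * y 0)) :=
        ((hps.comp (tendsto_add_atTop_nat 1)).sub_const _)
      refine h1.congr (fun N => ?_)
      rw [Finset.sum_range_succ' (fun n => a n * y n) N]
      ring
    have hc : Tendsto (fun N => ∑ n ∈ Finset.range N, y (n + 1) * (a (n + 1) / a 0)) atTop
        (nhds (-(y 0))) := by
      have h2 := hshift.div_const (a 0)
      have h3 : (0 - a 0 * y 0) / a 0 = -(y 0) := by field_simp; ring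
      rw [h3] at h2
      refine h2.congr (fun N => ?_)
      rw [Finset.sum_div]
      exact Finset.sum_congr rfl (fun n _ => by ring)
    have hT : Tendsto (fun N => ∑ n ∈ Finset.range N, y (n + 1) • e (n + 1)) atTop
        (nhds (y - y 0 • e 0)) := by
      have h1 : Tendsto (fun N => (∑ n ∈ Finset.range (N + 1), y n • e n) - y 0 • e 0) atTop
          (nhds (y - y 0 • e 0)) :=
        (((trunc y).comp (tendsto_add_atTop_nat 1)).sub_const _)
      refine h1.congr (fun N => ?_)
      rw [Finset.sum_range_succ' (fun n => y n • e n) N]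
      abel
    have hS : ∀ N, ∑ n ∈ Finset.range N, y (n + 1) • xvec a n
        = (∑ n ∈ Finset.range N, y (n + 1) • e (n + 1))
          - (∑ n ∈ Finset.range N, y (n + 1) * (a (n + 1) / a 0)) • e 0 := by
      intro N
      induction N with
      | zero => simp
      | succ N ih =>
        rw [Finset.sum_range_succ, ih, Finset.sum_range_succ, Finset.sum_range_succ, xvec]
        module
    have hfin := hT.sub (hc.smul_const (e 0))
    have hlim : (y - y 0 • e 0) - (-(y 0)) • e 0 = y := by
      module
    rw [hlim] at hfin
    exact hfin.congr (fun N => (hS N).symm)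
  refine ⟨key, le_antisymm ?_ ?_⟩
  · refine Submodule.topologicalClosure_minimal _ ?_ (ContinuousLinearMap.isClosed_ker _)
    rw [Submodule.span_le]
    rintro _ ⟨n, rfl⟩
    simp only [SetLike.mem_coe, LinearMap.mem_ker]
    show funcOf a (xvec a n) = 0
    rw [xvec, map_sub, map_smul, funcOf_e a ha, funcOf_e a ha, smul_eq_mul,
      div_mul_cancel₀ _ ha0', sub_self]
  · intro y hy
    have hy0 : funcOf a y = 0 := hy
    have h1 : ∀ N, ∑ n ∈ Finset.range N, y (n + 1) • xvec a n ∈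
        Submodule.span ℝ (Set.range (xvec a)) := fun N =>
      Submodule.sum_mem _ (fun n _ => Submodule.smul_mem _ _ (Submodule.subset_span ⟨n, rfl⟩))
    have h2 := mem_closure_of_tendsto (key y hy0) (Filter.Eventually.of_forall h1)
    rw [← SetLike.mem_coe, Submodule.topologicalClosure_coe]
    exact h2
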